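/- Let ρ ∈ M_n be a positive invertible diagonal matrix and let V_1,…,V_m ∈ M_n satisfy Tr(ρ^{-1}V_r*V_q) = δ² δ_{rq}. In the C*-correspondence M_n ⊗_ψ M_n (inner product ⟨a⊗b, c⊗d⟩ = ψ(a*c) b*d, with ψ = Tr(ρ·)), define ψ_{ar} := Σ_{j=1}^n e_{aj}ρ^{-1} ⊗ V_r e_{j1} for 1 ≤ a ≤ n and 1 ≤ r ≤ m. Then ⟨ψ_{a₁r₁}, ψ_{a₂r₂}⟩ = δ² δ_{a₁a₂} δ_{r₁r₂} e_{11}. In particular the elements φ_{ar} = (1/δ)ψ_{ar} satisfy ⟨φ_{ar}, φ_{ar}⟩ = e_{11}, a projection. -/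

import Mathlib

open scoped TensorProduct ComplexOrder
open Matrix

/-- The state `ψ = Tr(ρ ·)` on `M_n` as a linear functional. -/
noncomputable def psi1 {n : ℕ} (ρ : Matrix (Fin n) (Fin n) ℂ) :
    Matrix (Fin n) (Fin n) ℂ →ₗ[ℂ] ℂ where
  toFun X := (ρ * X).trace
  map_add' x y := by simp [mul_add]
  map_smul' c x := by simp [mul_smul_comm]

lemma std_mul_diag' {n : ℕ} (d : Fin n → ℂ) (a j : Fin n) (v : ℂ) :
    single a j v * diagonal d = single a j (v * d j) := by
  ext i k
  simp [mul_apply, single, diagonal, ite_and]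
  aesop

lemma diag_mul_std' {n : ℕ} (d : Fin n → ℂ) (a j : Fin n) (v : ℂ) :
    diagonal d * single a j v = single a j (d a * v) := by
  ext i k
  simp [mul_apply, single, diagonal, ite_and]
  aesop

lemma std_conjT' {n : ℕ} (a j : Fin n) (v : ℂ) :
    (single a j v)ᴴ = single j a (starRingEnd ℂ v) := by
  ext i k
  simp [single, conjTranspose_apply, and_comm, apply_ite (starRingEnd ℂ)]

lemma std_trace' {n : ℕ} (i j : Fin n) (v : ℂ) :
    (single i j v).trace = if i = j then v else 0 := by
  simp only [trace, diag, single, of_apply]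
  by_cases h : i = j
  · subst h; simp
  · simp only [h, if_false]
    exact Finset.sum_eq_zero fun x _ => by aesop

lemma std_sandwich' {n : ℕ} (z j k : Fin n) (M : Matrix (Fin n) (Fin n) ℂ) :
    single z j (1 : ℂ) * M * single k z (1 : ℂ) =
      single z z (M j k) := by
  ext i l
  by_cases hi : i = z
  · by_cases hl : l = z
    · rw [hi, hl, mul_single_apply_same, single_mul_apply_same]
      simp
    · rw [mul_single_apply_of_ne _ _ _ _ _ hl]
      exact (if_neg (fun hcon => hl hcon.2.symm)).symm
  · rw [Matrix.mul_assoc, single_mul_apply_of_ne _ _ _ _ _ hi]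
    simp [single, Ne.symm hi]

lemma trace_diag_mul' {n : ℕ} (d : Fin n → ℂ) (M : Matrix (Fin n) (Fin n) ℂ) :
    (diagonal d * M).trace = ∑ j, d j * M j j := by
  simp [trace, diag, mul_apply, diagonal, ite_and]

theorem stmt12 {n m : ℕ} (hn : 0 < n) (c : Fin n → ℝ) (hc : ∀ i, 0 < c i)
    (ρ : Matrix (Fin n) (Fin n) ℂ) (hρ : ρ = Matrix.diagonal (fun i => (c i : ℂ)))
    (δ : ℝ) (hδ : 0 < δ)
    (V : Fin m → Matrix (Fin n) (Fin n) ℂ)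
    (horth : ∀ r q, (ρ⁻¹ * (V r)ᴴ * V q).trace = if r = q then (δ ^ 2 : ℂ) else 0) :
    (∀ (a₁ a₂ : Fin n) (r₁ r₂ : Fin m),
      (∑ j, ∑ k,
        psi1 ρ ((single a₁ j (1 : ℂ) * ρ⁻¹)ᴴ * (single a₂ k (1 : ℂ) * ρ⁻¹)) •
          ((V r₁ * single j (⟨0, hn⟩ : Fin n) (1 : ℂ))ᴴ *
            (V r₂ * single k (⟨0, hn⟩ : Fin n) (1 : ℂ)))) =
        (δ ^ 2 : ℂ) • (if a₁ = a₂ ∧ r₁ = r₂ then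
          single (⟨0, hn⟩ : Fin n) (⟨0, hn⟩ : Fin n) (1 : ℂ) else 0)) ∧
    (∀ (a : Fin n) (r : Fin m),
      (∑ j, ∑ k,
        psi1 ρ (((1 / (δ : ℂ)) • (single a j (1 : ℂ) * ρ⁻¹))ᴴ *
            ((1 / (δ : ℂ)) • (single a k (1 : ℂ) * ρ⁻¹))) •
          ((V r * single j (⟨0, hn⟩ : Fin n) (1 : ℂ))ᴴ *
            (V r * single k (⟨0, hn⟩ : Fin n) (1 : ℂ)))) =
        single (⟨0, hn⟩ : Fin n) (⟨0, hn⟩ : Fin n) (1 : ℂ)) := by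
  have hc0 : ∀ i, (c i : ℂ) ≠ 0 := fun i => by
    exact_mod_cast Complex.ofReal_ne_zero.2 (ne_of_gt (hc i))
  set d : Fin n → ℂ := fun i => ((c i : ℂ))⁻¹ with hd
  have hinv : ρ⁻¹ = diagonal d := by
    apply Matrix.inv_eq_right_inv
    rw [hρ, diagonal_mul_diagonal]
    ext i k
    rcases eq_or_ne i k with h | h
    · subst h; simp [hd, mul_inv_cancel₀ (hc0 i)]
    · simp [h]
  set z : Fin n := ⟨0, hn⟩
  -- value of ψ on the left factors
  have hpsi : ∀ (a₁ a₂ j k : Fin n),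
      psi1 ρ ((single a₁ j (1 : ℂ) * ρ⁻¹)ᴴ * (single a₂ k (1 : ℂ) * ρ⁻¹)) =
        if a₁ = a₂ ∧ j = k then d j else 0 := by
    intro a₁ a₂ j k
    have hdstar : starRingEnd ℂ (1 * d j) = d j := by
      simp [hd, ← Complex.ofReal_inv]
    rw [hinv, std_mul_diag', std_mul_diag', std_conjT', hdstar]
    show (ρ * _).trace = _
    by_cases h : a₁ = a₂
    · subst h
      rw [single_mul_single_same, hρ, diag_mul_std', std_trace']
      by_cases hjk : j = k
      · subst hjk
        rw [if_pos rfl, if_pos ⟨rfl, rfl⟩, one_mul, ← mul_assoc,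
          mul_inv_cancel₀ (hc0 j), one_mul]
      · simp [hjk]
    · rw [single_mul_single_of_ne (h := h), Matrix.mul_zero, trace_zero]
      simp [h]
  -- value of the right factors
  have hright : ∀ (r₁ r₂ : Fin m) (j k : Fin n),
      (V r₁ * single j z (1 : ℂ))ᴴ * (V r₂ * single k z (1 : ℂ)) =
        single z z (((V r₁)ᴴ * V r₂) j k) := by
    intro r₁ r₂ j k
    rw [conjTranspose_mul, std_conjT', _root_.map_one, Matrix.mul_assoc, ← Matrix.mul_assoc ((V r₁)ᴴ),
      ← Matrix.mul_assoc, std_sandwich']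
  -- trace identity
  have htr : ∀ r₁ r₂ : Fin m,
      (∑ j, d j * ((V r₁)ᴴ * V r₂) j j) = if r₁ = r₂ then (δ ^ 2 : ℂ) else 0 := by
    intro r₁ r₂
    have := horth r₁ r₂
    rw [Matrix.mul_assoc, hinv, trace_diag_mul'] at this
    exact this
  have key : ∀ (a₁ a₂ : Fin n) (r₁ r₂ : Fin m),
      (∑ j, ∑ k,
        psi1 ρ ((single a₁ j (1 : ℂ) * ρ⁻¹)ᴴ * (single a₂ k (1 : ℂ) * ρ⁻¹)) •
          ((V r₁ * single j z (1 : ℂ))ᴴ * (V r₂ * single k z (1 : ℂ)))) =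
        (δ ^ 2 : ℂ) • (if a₁ = a₂ ∧ r₁ = r₂ then
          single z z (1 : ℂ) else 0) := by
    intro a₁ a₂ r₁ r₂
    simp only [hpsi, hright]
    by_cases h : a₁ = a₂
    · simp only [h, true_and, ite_smul, zero_smul]
      rw [Finset.sum_congr rfl (fun j _ => Finset.sum_ite_eq Finset.univ j
        (fun k => d j • single z z (((V r₁)ᴴ * V r₂) j k)))]
      simp only [Finset.mem_univ, if_true]
      have : ∀ j : Fin n, d j • single z z (((V r₁)ᴴ * V r₂) j j) =
          single z z (d j * ((V r₁)ᴴ * V r₂) j j) := fun j => by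
        rw [smul_single, smul_eq_mul]
      rw [Finset.sum_congr rfl (fun j _ => this j)]
      have hsum : (∑ j, single z z (d j * ((V r₁)ᴴ * V r₂) j j)) =
          single z z (∑ j, d j * ((V r₁)ᴴ * V r₂) j j) := by
        ext i l
        simp only [Matrix.sum_apply, single, of_apply]
        split_ifs <;> simp
      rw [hsum, htr]
      by_cases hr : r₁ = r₂ <;> simp [hr, smul_single]
    · simp [h]
  refine ⟨key, ?_⟩
  intro a r
  have hstar : (starRingEnd ℂ) (1 / (δ : ℂ)) = 1 / (δ : ℂ) := by
    simp [← Complex.ofReal_one, ← Complex.ofReal_div]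
  have hterm : ∀ j k : Fin n,
      psi1 ρ (((1 / (δ : ℂ)) • (single a j (1 : ℂ) * ρ⁻¹))ᴴ *
          ((1 / (δ : ℂ)) • (single a k (1 : ℂ) * ρ⁻¹))) =
        (1 / (δ : ℂ)) ^ 2 *
          psi1 ρ ((single a j (1 : ℂ) * ρ⁻¹)ᴴ *
            (single a k (1 : ℂ) * ρ⁻¹)) := by
    intro j k
    rw [conjTranspose_smul, smul_mul_smul_comm, _root_.map_smul, smul_eq_mul]
    congr 1
    rw [Complex.star_def, hstar, sq]
  calc (∑ j, ∑ k,
        psi1 ρ (((1 / (δ : ℂ)) • (single a j (1 : ℂ) * ρ⁻¹))ᴴ *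
            ((1 / (δ : ℂ)) • (single a k (1 : ℂ) * ρ⁻¹))) •
          ((V r * single j z (1 : ℂ))ᴴ * (V r * single k z (1 : ℂ))))
      = (1 / (δ : ℂ)) ^ 2 • (∑ j, ∑ k,
          psi1 ρ ((single a j (1 : ℂ) * ρ⁻¹)ᴴ * (single a k (1 : ℂ) * ρ⁻¹)) •
            ((V r * single j z (1 : ℂ))ᴴ * (V r * single k z (1 : ℂ)))) := by
        rw [Finset.smul_sum]
        refine Finset.sum_congr rfl fun j _ => ?_
        rw [Finset.smul_sum]
        refine Finset.sum_congr rfl fun k _ => ?_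
        rw [hterm, mul_smul]
    _ = (1 / (δ : ℂ)) ^ 2 • ((δ ^ 2 : ℂ) • single z z (1 : ℂ)) := by
        rw [key a a r r]; simp
    _ = single z z (1 : ℂ) := by
        rw [smul_smul]
        have hδ0 : (δ : ℂ) ≠ 0 := Complex.ofReal_ne_zero.2 (ne_of_gt hδ)
        rw [show (1 / (δ : ℂ)) ^ 2 * (δ:ℂ) ^ 2 = 1 by field_simp]
        rw [one_smul]
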